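/- For every integer k ≥ 1, the edge set of G = I_{3k} is partitioned by its triangles (each edge lies in exactly one triangle), and any spanning subgraph S of G obtained by deleting exactly one edge from each triangle of G is a 2-spanner of G, i.e. dist_S(x,y) ≤ 2 · dist_G(x,y) for all vertices x, y. In particular such a 2-spanner S exists and has exactly two thirds of the edges of G. -/

import Mathlib

open SimpleGraph Finset

/-- The graph `I_{3k}`: vertices are the `k`-element subsets of a `3k`-element set,
two of them adjacent iff they are disjoint. -/
def kneserI (k : ℕ) : SimpleGraph {A : Finset (Fin (3 * k)) // A.card = k} :=
  SimpleGraph.fromRel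
    (fun A B => Disjoint (A : Finset (Fin (3 * k))) (B : Finset (Fin (3 * k))))

/-- `S` is obtained from `G` by deleting exactly one edge from each triangle of `G`:
`S ≤ G` and for every triangle `{a,b,c}` of `G`, exactly one of its three edges is
missing from `S`. -/
def oneEdgePerTriangleDeleted {V : Type*} (G S : SimpleGraph V) : Prop :=
  S ≤ G ∧ ∀ a b c : V, G.Adj a b → G.Adj b c → G.Adj a c →
    ((¬ S.Adj a b ∧ S.Adj b c ∧ S.Adj a c) ∨
     (S.Adj a b ∧ ¬ S.Adj b c ∧ S.Adj a c) ∨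
     (S.Adj a b ∧ S.Adj b c ∧ ¬ S.Adj a c))

abbrev KV (k : ℕ) := {A : Finset (Fin (3 * k)) // A.card = k}

lemma kneser_adj {k : ℕ} (hk : 1 ≤ k) {A B : KV k} :
    (kneserI k).Adj A B ↔ Disjoint A.1 B.1 := by
  constructor
  · rintro ⟨hne, h | h⟩
    · exact h
    · exact h.symm
  · intro h
    refine ⟨?_, Or.inl h⟩
    rintro rfl
    have h2 := disjoint_self.mp h
    have := A.2
    rw [h2] at this
    simp at this
    omega

def third {k : ℕ} (A B : KV k) : KV k :=
  if h : Disjoint A.1 B.1 then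
    ⟨(A.1 ∪ B.1)ᶜ, by
      rw [Finset.card_compl, Finset.card_union_of_disjoint h, A.2, B.2]
      simp only [Fintype.card_fin]; omega⟩
  else A

lemma third_spec {k : ℕ} {A B : KV k} (h : Disjoint A.1 B.1) :
    (third A B).1 = (A.1 ∪ B.1)ᶜ := by
  rw [third, dif_pos h]

lemma third_comm {k : ℕ} {A B : KV k} (h : Disjoint A.1 B.1) : third A B = third B A := by
  apply Subtype.ext
  rw [third_spec h, third_spec h.symm, Finset.union_comm]

lemma third_adj_left {k : ℕ} (hk : 1 ≤ k) {A B : KV k} (h : (kneserI k).Adj A B) :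
    (kneserI k).Adj A (third A B) := by
  rw [kneser_adj hk] at h ⊢
  rw [third_spec h]
  exact disjoint_compl_right.mono_left Finset.subset_union_left

lemma third_adj_right {k : ℕ} (hk : 1 ≤ k) {A B : KV k} (h : (kneserI k).Adj A B) :
    (kneserI k).Adj B (third A B) := by
  rw [kneser_adj hk] at h ⊢
  rw [third_spec h]
  exact disjoint_compl_right.mono_left Finset.subset_union_right

lemma eq_third {k : ℕ} (hk : 1 ≤ k) {A B C : KV k} (hAB : (kneserI k).Adj A B)
    (hAC : (kneserI k).Adj A C) (hBC : (kneserI k).Adj B C) : C = third A B := by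
  rw [kneser_adj hk] at hAB hAC hBC
  apply Subtype.ext
  rw [third_spec hAB]
  apply Finset.eq_of_subset_of_card_le
  · intro x hx
    rw [Finset.mem_compl, Finset.mem_union]
    push_neg
    exact ⟨fun hA => Finset.disjoint_left.mp hAC hA hx,
           fun hB => Finset.disjoint_left.mp hBC hB hx⟩
  · have h3 : (A.1 ∪ B.1)ᶜ.card = k := by
      have := (third A B).2
      rwa [third_spec hAB] at this
    rw [C.2, h3]

lemma tri_symm_aux {k : ℕ} (A B : KV k) :
    ({A, B, third A B} : Finset (KV k)) = {B, A, third B A} := by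
  by_cases h : Disjoint A.1 B.1
  · rw [third_comm h]
    ext x; simp; tauto
  · have hBA : ¬ Disjoint B.1 A.1 := fun h' => h h'.symm
    rw [third, dif_neg h, third, dif_neg hBA]
    ext x; simp; tauto

noncomputable def tri (k : ℕ) : Sym2 (KV k) → Finset (KV k) :=
  Sym2.lift ⟨fun A B => {A, B, third A B}, tri_symm_aux⟩

lemma tri_mk {k : ℕ} (A B : KV k) : tri k s(A, B) = {A, B, third A B} := rfl

lemma edist_le_two_of_adj {k : ℕ} (hk : 1 ≤ k) {S : SimpleGraph (KV k)}
    (hS : oneEdgePerTriangleDeleted (kneserI k) S)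
    {u v : KV k} (h : (kneserI k).Adj u v) : S.edist u v ≤ 2 := by
  have huw := third_adj_left hk h
  have hvw := third_adj_right hk h
  have h2 : (2 : ℕ∞) = 1 + 1 := by norm_num
  rcases hS.2 u (third u v) v huw hvw.symm h with ⟨h1, h2', h3⟩ | ⟨h1, h2', h3⟩ | ⟨h1, h2', h3⟩
  · exact le_trans (le_of_eq (edist_eq_one_iff_adj.mpr h3)) one_le_two
  · exact le_trans (le_of_eq (edist_eq_one_iff_adj.mpr h3)) one_le_two
  · calc S.edist u v ≤ S.edist u (third u v) + S.edist (third u v) v :=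
        SimpleGraph.edist_triangle
      _ ≤ 1 + 1 := add_le_add (le_of_eq (edist_eq_one_iff_adj.mpr h1))
          (le_of_eq (edist_eq_one_iff_adj.mpr h2'))
      _ ≤ 2 := by norm_num

lemma walk_bound {V : Type*} {G S : SimpleGraph V}
    (hS : ∀ u v, G.Adj u v → S.edist u v ≤ 2) :
    ∀ {x y : V} (p : G.Walk x y), S.edist x y ≤ 2 * p.length := by
  intro x y p
  induction p with
  | nil => simp
  | @cons a b c h p ih =>
    calc S.edist a c ≤ S.edist a b + S.edist b c := SimpleGraph.edist_triangle
      _ ≤ 2 + 2 * p.length := add_le_add (hS _ _ h) ih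
      _ = 2 * (p.length + 1 : ℕ) := by push_cast; ring
      _ = 2 * (SimpleGraph.Walk.cons h p).length := by rw [SimpleGraph.Walk.length_cons]

lemma spanner {V : Type*} {G S : SimpleGraph V}
    (hS : ∀ u v, G.Adj u v → S.edist u v ≤ 2) (x y : V) :
    S.edist x y ≤ 2 * G.edist x y := by
  by_cases hr : G.Reachable x y
  · obtain ⟨p, hp⟩ := hr.exists_walk_length_eq_edist
    rw [← hp]
    exact walk_bound hS p
  · rw [SimpleGraph.edist_eq_top_of_not_reachable hr]
    exact le_of_le_of_eq le_top (by simp)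

lemma mem_fiber_iff {k : ℕ} (hk : 1 ≤ k) {A B : KV k} (hadj : (kneserI k).Adj A B)
    {e : Sym2 (KV k)} (he : e ∈ (kneserI k).edgeSet) :
    tri k e = tri k s(A, B) ↔
      e = s(A, B) ∨ e = s(B, third A B) ∨ e = s(A, third A B) := by
  set C := third A B with hC
  have hAC : (kneserI k).Adj A C := third_adj_left hk hadj
  have hBC : (kneserI k).Adj B C := third_adj_right hk hadj
  have hthBC : third B C = A := (eq_third hk hBC hadj.symm hAC.symm).symm
  have hthAC : third A C = B := (eq_third hk hAC hadj hBC.symm).symm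
  have htBC : tri k s(B, C) = tri k s(A, B) := by
    rw [tri_mk, tri_mk, hthBC, ← hC]
    ext x; simp; tauto
  have htAC : tri k s(A, C) = tri k s(A, B) := by
    rw [tri_mk, tri_mk, hthAC, ← hC]
    ext x; simp; tauto
  constructor
  · intro htri
    induction e using Sym2.ind with
    | _ X Y =>
      have hXY : (kneserI k).Adj X Y := he
      have htri' : ({X, Y, third X Y} : Finset (KV k)) = {A, B, C} := by
        rw [← tri_mk, ← tri_mk, htri]
      have hX : X ∈ ({A, B, C} : Finset (KV k)) := by
        rw [← htri']; simp
      have hY : Y ∈ ({A, B, C} : Finset (KV k)) := by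
        rw [← htri']; simp
      have hne : X ≠ Y := hXY.ne
      simp only [Finset.mem_insert, Finset.mem_singleton] at hX hY
      rcases hX with rfl | rfl | rfl <;> rcases hY with rfl | rfl | rfl <;>
        simp_all [Sym2.eq_swap]
  · rintro (rfl | rfl | rfl)
    · rfl
    · exact htBC
    · exact htAC

lemma fiber_card_G {k : ℕ} (hk : 1 ≤ k) {A B : KV k} (hadj : (kneserI k).Adj A B) :
    ((kneserI k).edgeSet.toFinite.toFinset.filter
      (fun e => tri k e = tri k s(A, B))).card = 3 := by
  classical
  set C := third A B with hC
  have hAC : (kneserI k).Adj A C := third_adj_left hk hadj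
  have hBC : (kneserI k).Adj B C := third_adj_right hk hadj
  have hAB : A ≠ B := hadj.ne
  have hAC' : A ≠ C := hAC.ne
  have hBC' : B ≠ C := hBC.ne
  have hset : ((kneserI k).edgeSet.toFinite.toFinset.filter
      (fun e => tri k e = tri k s(A, B))) = {s(A, B), s(B, C), s(A, C)} := by
    ext e
    simp only [Finset.mem_filter, Set.Finite.mem_toFinset, Finset.mem_insert,
      Finset.mem_singleton]
    constructor
    · rintro ⟨he, htri⟩
      exact (mem_fiber_iff hk hadj he).mp htri
    · rintro (rfl | rfl | rfl)
      · exact ⟨hadj, rfl⟩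
      · exact ⟨hBC, (mem_fiber_iff hk hadj hBC).mpr (Or.inr (Or.inl rfl))⟩
      · exact ⟨hAC, (mem_fiber_iff hk hadj hAC).mpr (Or.inr (Or.inr rfl))⟩
  rw [hset]
  rw [Finset.card_insert_of_notMem, Finset.card_insert_of_notMem, Finset.card_singleton]
  · simp only [Finset.mem_singleton, Sym2.eq_iff]
    tauto
  · simp only [Finset.mem_insert, Finset.mem_singleton, Sym2.eq_iff]
    tauto

lemma fiber_card_S {k : ℕ} (hk : 1 ≤ k) {S : SimpleGraph (KV k)}
    (hS : oneEdgePerTriangleDeleted (kneserI k) S)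
    {A B : KV k} (hadj : (kneserI k).Adj A B) :
    (S.edgeSet.toFinite.toFinset.filter
      (fun e => tri k e = tri k s(A, B))).card = 2 := by
  classical
  set C := third A B with hC
  have hAC : (kneserI k).Adj A C := third_adj_left hk hadj
  have hBC : (kneserI k).Adj B C := third_adj_right hk hadj
  have hAB : A ≠ B := hadj.ne
  have hAC' : A ≠ C := hAC.ne
  have hBC' : B ≠ C := hBC.ne
  have hmem : ∀ X Y : KV k, s(X, Y) ∈ S.edgeSet ↔ S.Adj X Y := fun _ _ => Iff.rfl
  have key : ∀ e, e ∈ S.edgeSet → (tri k e = tri k s(A, B) ↔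
      e = s(A, B) ∨ e = s(B, C) ∨ e = s(A, C)) := by
    intro e he
    exact mem_fiber_iff hk hadj (SimpleGraph.edgeSet_subset_edgeSet.mpr hS.1 he)
  rcases hS.2 A B C hadj hBC hAC with ⟨h1, h2, h3⟩ | ⟨h1, h2, h3⟩ | ⟨h1, h2, h3⟩
  · have hset : (S.edgeSet.toFinite.toFinset.filter
        (fun e => tri k e = tri k s(A, B))) = {s(B, C), s(A, C)} := by
      ext e
      simp only [Finset.mem_filter, Set.Finite.mem_toFinset, Finset.mem_insert,
        Finset.mem_singleton]
      constructor
      · rintro ⟨he, htri⟩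
        rcases (key e he).mp htri with rfl | rfl | rfl
        · exact absurd he h1
        · exact Or.inl rfl
        · exact Or.inr rfl
      · rintro (rfl | rfl)
        · exact ⟨h2, (key _ h2).mpr (Or.inr (Or.inl rfl))⟩
        · exact ⟨h3, (key _ h3).mpr (Or.inr (Or.inr rfl))⟩
    rw [hset, Finset.card_insert_of_notMem, Finset.card_singleton]
    simp only [Finset.mem_singleton, Sym2.eq_iff]; tauto
  · have hset : (S.edgeSet.toFinite.toFinset.filter
        (fun e => tri k e = tri k s(A, B))) = {s(A, B), s(A, C)} := by
      ext e
      simp only [Finset.mem_filter, Set.Finite.mem_toFinset, Finset.mem_insert,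
        Finset.mem_singleton]
      constructor
      · rintro ⟨he, htri⟩
        rcases (key e he).mp htri with rfl | rfl | rfl
        · exact Or.inl rfl
        · exact absurd he h2
        · exact Or.inr rfl
      · rintro (rfl | rfl)
        · exact ⟨h1, (key _ h1).mpr (Or.inl rfl)⟩
        · exact ⟨h3, (key _ h3).mpr (Or.inr (Or.inr rfl))⟩
    rw [hset, Finset.card_insert_of_notMem, Finset.card_singleton]
    simp only [Finset.mem_singleton, Sym2.eq_iff]; tauto
  · have hset : (S.edgeSet.toFinite.toFinset.filter
        (fun e => tri k e = tri k s(A, B))) = {s(A, B), s(B, C)} := by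
      ext e
      simp only [Finset.mem_filter, Set.Finite.mem_toFinset, Finset.mem_insert,
        Finset.mem_singleton]
      constructor
      · rintro ⟨he, htri⟩
        rcases (key e he).mp htri with rfl | rfl | rfl
        · exact Or.inl rfl
        · exact Or.inr rfl
        · exact absurd he h3
      · rintro (rfl | rfl)
        · exact ⟨h1, (key _ h1).mpr (Or.inl rfl)⟩
        · exact ⟨h2, (key _ h2).mpr (Or.inr (Or.inl rfl))⟩
    rw [hset, Finset.card_insert_of_notMem, Finset.card_singleton]
    simp only [Finset.mem_singleton, Sym2.eq_iff]; tauto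

lemma count_lemma {k : ℕ} (hk : 1 ≤ k) {S : SimpleGraph (KV k)}
    (hS : oneEdgePerTriangleDeleted (kneserI k) S) :
    3 * S.edgeSet.ncard = 2 * (kneserI k).edgeSet.ncard := by
  classical
  set EG := (kneserI k).edgeSet.toFinite.toFinset with hEG
  set ES := S.edgeSet.toFinite.toFinset with hES
  have hsub : ES ⊆ EG := by
    intro e he
    rw [hES, Set.Finite.mem_toFinset] at he
    rw [hEG, Set.Finite.mem_toFinset]
    exact SimpleGraph.edgeSet_subset_edgeSet.mpr hS.1 he
  set t := EG.image (tri k) with ht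
  have hG : EG.card = ∑ b ∈ t, (EG.filter fun e => tri k e = b).card :=
    Finset.card_eq_sum_card_fiberwise (fun e he => Finset.mem_image_of_mem _ he)
  have hSc : ES.card = ∑ b ∈ t, (ES.filter fun e => tri k e = b).card :=
    Finset.card_eq_sum_card_fiberwise (fun e he => Finset.mem_image_of_mem _ (hsub he))
  have hG3 : ∀ b ∈ t, (EG.filter fun e => tri k e = b).card = 3 := by
    intro b hb
    obtain ⟨e, he, rfl⟩ := Finset.mem_image.mp hb
    rw [hEG, Set.Finite.mem_toFinset] at he
    revert he
    induction e using Sym2.ind with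
    | _ A B =>
      intro he
      exact fiber_card_G hk (((kneserI k).mem_edgeSet).mp he)
  have hS2 : ∀ b ∈ t, (ES.filter fun e => tri k e = b).card = 2 := by
    intro b hb
    obtain ⟨e, he, rfl⟩ := Finset.mem_image.mp hb
    rw [hEG, Set.Finite.mem_toFinset] at he
    revert he
    induction e using Sym2.ind with
    | _ A B =>
      intro he
      exact fiber_card_S hk hS (((kneserI k).mem_edgeSet).mp he)
  have h1 : EG.card = 3 * t.card := by
    rw [hG, Finset.sum_congr rfl hG3, Finset.sum_const, smul_eq_mul, mul_comm]
  have h2 : ES.card = 2 * t.card := by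
    rw [hSc, Finset.sum_congr rfl hS2, Finset.sum_const, smul_eq_mul, mul_comm]
  rw [Set.ncard_eq_toFinset_card _ ((kneserI k).edgeSet.toFinite),
    Set.ncard_eq_toFinset_card _ (S.edgeSet.toFinite), ← hEG, ← hES, h1, h2]
  ring

noncomputable def rk {k : ℕ} (A : KV k) : ℕ := Fintype.equivFin (KV k) A

lemma rk_inj {k : ℕ} {A B : KV k} (h : rk A = rk B) : A = B :=
  (Fintype.equivFin (KV k)).injective (Fin.val_injective h)

noncomputable def Sgood (k : ℕ) : SimpleGraph (KV k) where
  Adj A B := (kneserI k).Adj A B ∧ ¬(rk A < rk (third A B) ∧ rk B < rk (third A B))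
  symm := by
    constructor
    rintro A B ⟨h, h2⟩
    have hd : Disjoint A.1 B.1 := by
      rcases h with ⟨_, hd | hd⟩
      · exact hd
      · exact hd.symm
    refine ⟨h.symm, ?_⟩
    rw [← third_comm hd]
    tauto
  loopless := by
    constructor
    rintro A ⟨h, _⟩
    exact (kneserI k).irrefl h

lemma Sgood_spec (k : ℕ) (hk : 1 ≤ k) :
    oneEdgePerTriangleDeleted (kneserI k) (Sgood k) := by
  constructor
  · exact fun A B h => h.1
  · intro a b c hab hbc hac
    have hca : c = third a b := eq_third hk hab hac hbc
    have hab' : a = third b c := eq_third hk hbc hab.symm hac.symm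
    have hbc' : b = third a c := eq_third hk hac hab hbc.symm
    have e1 : (Sgood k).Adj a b ↔ ¬(rk a < rk c ∧ rk b < rk c) := by
      show ((kneserI k).Adj a b ∧ _) ↔ _
      rw [← hca]
      exact ⟨fun h => h.2, fun h => ⟨hab, h⟩⟩
    have e2 : (Sgood k).Adj b c ↔ ¬(rk b < rk a ∧ rk c < rk a) := by
      show ((kneserI k).Adj b c ∧ _) ↔ _
      rw [← hab']
      exact ⟨fun h => h.2, fun h => ⟨hbc, h⟩⟩
    have e3 : (Sgood k).Adj a c ↔ ¬(rk a < rk b ∧ rk c < rk b) := by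
      show ((kneserI k).Adj a c ∧ _) ↔ _
      rw [← hbc']
      exact ⟨fun h => h.2, fun h => ⟨hac, h⟩⟩
    rw [e1, e2, e3]
    have d1 : rk a ≠ rk b := fun h => hab.ne (rk_inj h)
    have d2 : rk b ≠ rk c := fun h => hbc.ne (rk_inj h)
    have d3 : rk a ≠ rk c := fun h => hac.ne (rk_inj h)
    omega


/-- For `k ≥ 1`, the edge set of `G = I_{3k}` is partitioned by its
triangles (each edge lies in exactly one triangle, i.e. the endpoints of each edge
have exactly one common neighbor); every spanning subgraph `S` of `G` obtained by
deleting exactly one edge from each triangle is a 2-spanner of `G` with exactly two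
thirds of the edges of `G`; and such a subgraph `S` exists. -/
theorem stmt_17 (k : ℕ) (hk : 1 ≤ k) :
    (∀ u v : {A : Finset (Fin (3 * k)) // A.card = k}, (kneserI k).Adj u v →
      ∃! w : {A : Finset (Fin (3 * k)) // A.card = k},
        (kneserI k).Adj u w ∧ (kneserI k).Adj v w) ∧
    (∀ S : SimpleGraph {A : Finset (Fin (3 * k)) // A.card = k},
      oneEdgePerTriangleDeleted (kneserI k) S →
        (∀ x y : {A : Finset (Fin (3 * k)) // A.card = k},
          S.edist x y ≤ 2 * (kneserI k).edist x y) ∧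
        3 * S.edgeSet.ncard = 2 * (kneserI k).edgeSet.ncard) ∧
    (∃ S : SimpleGraph {A : Finset (Fin (3 * k)) // A.card = k},
      oneEdgePerTriangleDeleted (kneserI k) S) := by
  refine ⟨?_, ?_, ⟨Sgood k, Sgood_spec k hk⟩⟩
  · intro u v h
    exact ⟨third u v, ⟨third_adj_left hk h, third_adj_right hk h⟩,
      fun y ⟨h1, h2⟩ => eq_third hk h h1 h2⟩
  · intro S hS
    exact ⟨spanner (fun u v h => edist_le_two_of_adj hk hS h), count_lemma hk hS⟩
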